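/- For N ≥ 2 and any P with 1/4 < P^N·Σ_{k=0}^{N} 3^k·binomial(N,k) and P < 1/3, the optimal correlated N-run score S_N(P) (the value of the linear program maximizing (8/N)·Σ_k k·p_k·3^k·binomial(N,k) − 4 subject to Σ_k p_k·3^k·binomial(N,k) = 1 and 0 ≤ p_k ≤ P^N) is at least the repeated one-shot score 24P − 4, with strict inequality for some P ∈ (1/4, 1/3). -/

import Mathlib

open Finset

/-- The optimal value of the N-run correlated CHSH linear program with
measurement-dependence bound `P`. -/
noncomputable def chshLPValue (N : ℕ) (P : ℝ) : ℝ :=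
  sSup {S : ℝ | ∃ p : ℕ → ℝ,
    (∀ k, 0 ≤ p k ∧ p k ≤ P ^ N) ∧
    (∑ k ∈ Finset.range (N + 1), p k * 3 ^ k * (N.choose k : ℝ) = 1) ∧
    S = (8 / N) * ∑ k ∈ Finset.range (N + 1),
          (k : ℝ) * p k * 3 ^ k * (N.choose k : ℝ) - 4}

lemma sum_binom (x y : ℝ) (N : ℕ) :
    ∑ k ∈ range (N+1), x^k * y^(N-k) * (N.choose k : ℝ) = (x+y)^N :=
  (add_pow x y N).symm

lemma sum_k_binom (x y : ℝ) (N : ℕ) (hN : 1 ≤ N) :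
    ∑ k ∈ range (N+1), (k:ℝ) * (x^k * y^(N-k) * (N.choose k : ℝ))
      = N * x * (x+y)^(N-1) := by
  obtain ⟨M, rfl⟩ : ∃ M, N = M + 1 := ⟨N - 1, (Nat.succ_pred_eq_of_pos hN).symm⟩
  rw [Finset.sum_range_succ']
  simp only [Nat.cast_zero, zero_mul, add_zero]
  have key : ∀ j ∈ range (M+1),
      (((j:ℕ)+1 : ℕ):ℝ) * (x^(j+1) * y^(M+1-(j+1)) * (((M+1).choose (j+1)) : ℝ))
        = ((M:ℝ)+1) * x * (x^j * y^(M-j) * (M.choose j : ℝ)) := by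
    intro j hj
    have h := Nat.add_one_mul_choose_eq M j
    have h2 : ((M+1 : ℕ) : ℝ) * (M.choose j : ℝ) = ((M+1).choose (j+1) : ℝ) * ((j:ℝ)+1) := by
      exact_mod_cast congrArg (Nat.cast : ℕ → ℝ) h
    have h3 : M + 1 - (j+1) = M - j := by omega
    rw [h3]
    push_cast
    calc ((j:ℝ)+1) * (x^(j+1) * y^(M-j) * (((M+1).choose (j+1)) : ℝ))
        = (((M+1).choose (j+1) : ℝ) * ((j:ℝ)+1)) * (x^(j+1) * y^(M-j)) := by ring
      _ = (((M+1 : ℕ) : ℝ) * (M.choose j : ℝ)) * (x^(j+1) * y^(M-j)) := by rw [h2]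
      _ = ((M:ℝ)+1) * x * (x^j * y^(M-j) * (M.choose j : ℝ)) := by push_cast; ring
  rw [Finset.sum_congr rfl key, ← Finset.mul_sum, sum_binom]
  push_cast
  ring_nf

lemma mem_attack (N : ℕ) (P a : ℝ) (hN : 2 ≤ N) (hP1 : 1/4 < P) (hP2 : P < 1/3)
    (ha : 0 ≤ a) (ha2 : a ≤ P^(N-1) * (4*P - 1))
    (ha3 : a * (3^(N-1) * N) ≤ (1-3*P)^N) :
    (24 * P - 4 + 8*((N:ℝ)-1)*3^(N-1)*a) ∈ {S : ℝ | ∃ p : ℕ → ℝ,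
    (∀ k, 0 ≤ p k ∧ p k ≤ P ^ N) ∧
    (∑ k ∈ Finset.range (N + 1), p k * 3 ^ k * (N.choose k : ℝ) = 1) ∧
    S = (8 / N) * ∑ k ∈ Finset.range (N + 1),
          (k : ℝ) * p k * 3 ^ k * (N.choose k : ℝ) - 4} := by
  have hP0 : 0 < P := lt_trans (by norm_num) hP1
  have hy0 : 0 ≤ 1 - 3*P := by linarith
  have hyP : 1 - 3*P ≤ P := by linarith
  have hP1' : P ≤ 1 := by linarith
  set q : ℕ → ℝ := fun k => P^k * (1-3*P)^(N-k) with hq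
  have hq0 : ∀ k, 0 ≤ q k := fun k =>
    mul_nonneg (pow_nonneg hP0.le _) (pow_nonneg hy0 _)
  have hqP : ∀ k, q k ≤ P ^ N := by
    intro k
    by_cases hk : k ≤ N
    · have h1 : (1-3*P)^(N-k) ≤ P^(N-k) := pow_le_pow_left₀ hy0 hyP _
      calc q k ≤ P^k * P^(N-k) :=
            mul_le_mul_of_nonneg_left h1 (pow_nonneg hP0.le _)
        _ = P ^ N := by rw [← pow_add]; congr 1; omega
    · have h1 : N - k = 0 := by omega
      have : q k = P ^ k := by simp [hq, h1]
      rw [this]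
      exact pow_le_pow_of_le_one hP0.le hP1' (by omega)
  refine ⟨fun k => q k + (if k = N-1 then a else 0) - (if k = 0 then a * (3^(N-1)*N) else 0),
    ?_, ?_, ?_⟩
  · intro k
    by_cases h0 : k = 0
    · subst h0
      have hne : (0:ℕ) ≠ N - 1 := by omega
      simp only [if_pos rfl, if_neg hne, eq_self_iff_true, if_true]
      constructor
      · have : q 0 = (1-3*P)^N := by simp [hq]
        rw [this]; linarith
      · have h1 : 0 ≤ a * (3^(N-1)*(N:ℝ)) := by positivity
        linarith [hqP 0]
    · by_cases h1 : k = N - 1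
      · subst h1
        simp only [if_pos rfl, if_neg h0, sub_zero, eq_self_iff_true, if_true]
        constructor
        · linarith [hq0 (N-1)]
        · have hqv : q (N-1) = P^(N-1) * (1-3*P) := by
            have hnn : N - (N-1) = 1 := by omega
            simp only [hq, hnn, pow_one]
          have : P^(N-1) * (1-3*P) + a ≤ P^(N-1) * (1-3*P) + P^(N-1)*(4*P-1) := by linarith
          have hpow : P^(N-1) * P = P^N := by
            rw [← pow_succ]
            congr 1
            omega
          have h2 : P^(N-1) * (1-3*P) + P^(N-1)*(4*P-1) = P^N := by
            calc P^(N-1) * (1-3*P) + P^(N-1)*(4*P-1) = P^(N-1) * P := by ring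
              _ = P^N := hpow
          rw [hqv]
          linarith
      · simp only [if_neg h0, if_neg h1, add_zero, sub_zero]
        exact ⟨hq0 k, hqP k⟩
  · have e1 : ∀ k ∈ range (N+1),
        (q k + (if k = N-1 then a else 0) - (if k = 0 then a * (3^(N-1)*N) else 0)) * 3^k * (N.choose k : ℝ)
        = (3*P)^k * (1-3*P)^(N-k) * (N.choose k : ℝ)
          + (if k = N-1 then a * 3^(N-1) * (N.choose (N-1) : ℝ) else 0)
          - (if k = 0 then a * (3^(N-1)*N) else 0) := by
      intro k hk
      by_cases h0 : k = 0
      · subst h0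
        have hne : (0:ℕ) ≠ N - 1 := by omega
        simp [hq, if_neg hne]
      · by_cases h1 : k = N-1
        · subst h1
          simp only [if_pos rfl, if_neg h0, hq, mul_pow, eq_self_iff_true, if_true]
          ring
        · simp only [if_neg h0, if_neg h1, add_zero, sub_zero, hq, mul_pow]
          ring
    rw [Finset.sum_congr rfl e1]
    rw [Finset.sum_sub_distrib, Finset.sum_add_distrib]
    rw [sum_binom]
    rw [Finset.sum_ite_eq' (range (N+1)) (N-1), Finset.sum_ite_eq' (range (N+1)) 0]
    have hm1 : N - 1 ∈ range (N+1) := by simp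
    have hm0 : (0:ℕ) ∈ range (N+1) := by simp
    rw [if_pos hm1, if_pos hm0]
    have hc : (N.choose (N-1) : ℝ) = N := by
      have : N.choose (N-1) = N.choose 1 := by
        rw [← Nat.choose_symm (by omega : 1 ≤ N)]
      rw [this, Nat.choose_one_right]
    rw [hc]
    ring_nf
  · have hNR : (0:ℝ) < N := by exact_mod_cast (by omega : 0 < N)
    have e1 : ∀ k ∈ range (N+1),
        (k:ℝ) * (q k + (if k = N-1 then a else 0) - (if k = 0 then a * (3^(N-1)*N) else 0)) * 3^k * (N.choose k : ℝ)
        = (k:ℝ) * ((3*P)^k * (1-3*P)^(N-k) * (N.choose k : ℝ))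
          + (if k = N-1 then ((N:ℝ)-1) * a * 3^(N-1) * (N.choose (N-1) : ℝ) else 0) := by
      intro k hk
      by_cases h0 : k = 0
      · subst h0
        have hne : (0:ℕ) ≠ N - 1 := by omega
        simp [if_neg hne]
      · by_cases h1 : k = N-1
        · subst h1
          have hc : ((N-1 : ℕ) : ℝ) = (N:ℝ) - 1 := by
            rw [Nat.cast_sub (by omega : 1 ≤ N)]
            simp
          simp only [if_pos rfl, if_neg h0, hq, mul_pow, hc, eq_self_iff_true, if_true]
          ring
        · simp only [if_neg h0, if_neg h1, add_zero, sub_zero, hq, mul_pow]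
          ring
    rw [Finset.sum_congr rfl e1, Finset.sum_add_distrib]
    rw [sum_k_binom (3*P) (1-3*P) N (by omega)]
    rw [Finset.sum_ite_eq' (range (N+1)) (N-1)]
    have hm1 : N - 1 ∈ range (N+1) := by simp
    rw [if_pos hm1]
    have hc : (N.choose (N-1) : ℝ) = N := by
      have : N.choose (N-1) = N.choose 1 := by
        rw [← Nat.choose_symm (by omega : 1 ≤ N)]
      rw [this, Nat.choose_one_right]
    rw [hc]
    have : (3*P + (1-3*P)) = 1 := by ring
    rw [this, one_pow]
    field_simp
    ring

lemma bdd_above_set (N : ℕ) (P : ℝ) (hN : 1 ≤ N) :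
    BddAbove {S : ℝ | ∃ p : ℕ → ℝ,
    (∀ k, 0 ≤ p k ∧ p k ≤ P ^ N) ∧
    (∑ k ∈ Finset.range (N + 1), p k * 3 ^ k * (N.choose k : ℝ) = 1) ∧
    S = (8 / N) * ∑ k ∈ Finset.range (N + 1),
          (k : ℝ) * p k * 3 ^ k * (N.choose k : ℝ) - 4} := by
  use 4
  rintro S ⟨p, hp, hsum, rfl⟩
  have hNR : (0:ℝ) < N := by exact_mod_cast (by omega : 0 < N)
  have hX : ∑ k ∈ Finset.range (N + 1), (k : ℝ) * p k * 3 ^ k * (N.choose k : ℝ)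
      ≤ (N:ℝ) := by
    calc ∑ k ∈ Finset.range (N + 1), (k : ℝ) * p k * 3 ^ k * (N.choose k : ℝ)
        ≤ ∑ k ∈ Finset.range (N + 1), (N:ℝ) * (p k * 3 ^ k * (N.choose k : ℝ)) := by
          apply Finset.sum_le_sum
          intro k hk
          have hk' : (k:ℝ) ≤ (N:ℝ) := by
            exact_mod_cast Nat.lt_succ_iff.mp (Finset.mem_range.mp hk)
          have hnn : 0 ≤ p k * 3 ^ k * (N.choose k : ℝ) := by
            have := (hp k).1
            positivity
          calc (k : ℝ) * p k * 3 ^ k * (N.choose k : ℝ)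
              = (k:ℝ) * (p k * 3 ^ k * (N.choose k : ℝ)) := by ring
            _ ≤ (N:ℝ) * (p k * 3 ^ k * (N.choose k : ℝ)) :=
                mul_le_mul_of_nonneg_right hk' hnn
      _ = (N:ℝ) := by rw [← Finset.mul_sum, hsum, mul_one]
  have h8 : (0:ℝ) ≤ 8 / N := by positivity
  have : (8 / (N:ℝ)) * ∑ k ∈ Finset.range (N + 1),
      (k : ℝ) * p k * 3 ^ k * (N.choose k : ℝ) ≤ (8 / (N:ℝ)) * N :=
    mul_le_mul_of_nonneg_left hX h8
  have hdiv : (8 / (N:ℝ)) * N = 8 := by field_simp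
  linarith [this, hdiv ▸ this]

theorem correlated_attack_dominates (N : ℕ) (hN : 2 ≤ N) :
    (∀ P : ℝ, 1/4 < P → P < 1/3 → 24 * P - 4 ≤ chshLPValue N P) ∧
    ∃ P : ℝ, 1/4 < P ∧ P < 1/3 ∧ 24 * P - 4 < chshLPValue N P := by
  constructor
  · intro P hP1 hP2
    have hm := mem_attack N P 0 hN hP1 hP2 le_rfl
      (mul_nonneg (pow_nonneg (by linarith) _) (by linarith))
      (by rw [zero_mul]; exact pow_nonneg (by linarith) N)
    simp only [mul_zero, add_zero] at hm
    rw [chshLPValue]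
    exact le_csSup (bdd_above_set N P (by omega)) hm
  · refine ⟨3/10, by norm_num, by norm_num, ?_⟩
    set P : ℝ := 3/10 with hPdef
    set a : ℝ := min (P^(N-1) * (4*P - 1)) ((1-3*P)^N / (3^(N-1) * N)) with hadef
    have hNR : (0:ℝ) < N := by exact_mod_cast (by omega : 0 < N)
    have hden : (0:ℝ) < 3^(N-1) * N := by positivity
    have ha0 : 0 < a := by
      apply lt_min
      · have : (0:ℝ) < 4*P - 1 := by norm_num [hPdef]
        positivity
      · have h10 : (1-3*P) = 1/10 := by norm_num [hPdef]
        rw [h10]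
        positivity
    have ha2 : a ≤ P^(N-1) * (4*P - 1) := min_le_left _ _
    have ha3 : a * (3^(N-1) * N) ≤ (1-3*P)^N := by
      have := min_le_right (P^(N-1) * (4*P - 1)) ((1-3*P)^N / (3^(N-1) * N))
      calc a * (3^(N-1) * (N:ℝ)) ≤ ((1-3*P)^N / (3^(N-1) * N)) * (3^(N-1) * N) :=
            mul_le_mul_of_nonneg_right this hden.le
        _ = (1-3*P)^N := by field_simp
    have hm := mem_attack N P a hN (by norm_num [hPdef]) (by norm_num [hPdef]) ha0.le ha2 ha3
    have hpos : 0 < 8*((N:ℝ)-1)*3^(N-1)*a := by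
      have h1 : (1:ℝ) ≤ (N:ℝ) - 1 := by
        have : (2:ℝ) ≤ (N:ℝ) := by exact_mod_cast hN
        linarith
      have h2 : (0:ℝ) < 3^(N-1) := by positivity
      exact mul_pos (mul_pos (mul_pos (by norm_num : (0:ℝ) < 8) (by linarith : (0:ℝ) < (N:ℝ)-1)) h2) ha0
    calc 24 * P - 4 < 24 * P - 4 + 8*((N:ℝ)-1)*3^(N-1)*a := by linarith
      _ ≤ chshLPValue N P := by
          rw [chshLPValue]
          exact le_csSup (bdd_above_set N P (by omega)) hm
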